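/- Let A be a commutative unital C*-algebra and let E be a Hilbert C*-module over A possessing an orthonormal basis ε. Let Φ : F(E) → F(E) be a rank-1 preserving A-linear map such that for every x ∈ E there is φ(x) ∈ E with Φ(L_x^{CI}) ⊆ L_{φ(x)}^{CI}, and for every f ∈ E there is r(f) ∈ E with Φ(R_f^{CI}) ⊆ R_{r(f)}^{CI}. Suppose there exist f₁, f₂ ∈ CI such that r(f₁) ≠ α r(f₂) and r(f₂) ≠ β r(f₁) for all α, β ∈ A. Then there exist A-linear maps A, C : E → E such that Φ(θ_{x,f}) = θ_{Ax,Cf} for all x, f ∈ E. -/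

import Mathlib

/-- A (left) Hilbert C*-module structure on `E` over the C*-algebra `A`:
an `A`-valued inner product, `A`-linear in the first variable and conjugate
`A`-linear in the second, positive and definite, compatible with the norm of `E`,
for which `E` is complete. -/
structure HilbertModule (A : Type*) (E : Type*) [CStarAlgebra A]
    [NormedAddCommGroup E] [Module A E] where
  inner : E → E → A
  inner_add_left : ∀ x y z : E, inner (x + y) z = inner x z + inner y z
  inner_smul_left : ∀ (a : A) (x y : E), inner (a • x) y = a * inner x y
  inner_conj_symm : ∀ x y : E, inner y x = star (inner x y)
  inner_self_pos : ∀ x : E, ∃ c : A, inner x x = star c * c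
  inner_self_eq_zero : ∀ x : E, inner x x = 0 → x = 0
  norm_sq_eq : ∀ x : E, ‖x‖ ^ 2 = ‖inner x x‖
  complete : CompleteSpace E

namespace HilbertModule

variable {A E : Type*} [CStarAlgebra A] [NormedAddCommGroup E] [Module A E]
variable (M : HilbertModule A E)

/-- The "rank-one" module map `θ_{x,y} : ξ ↦ ⟨ξ,y⟩x`. -/
def theta (x y : E) : E → E := fun ξ => M.inner ξ y • x

/-- `e : ι → E` is an orthonormal basis: `⟨e i, e j⟩ = δ_{ij}` and every `x`
is the norm-convergent sum `Σ_i ⟨x, e i⟩ • e i`. -/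
structure IsONB {ι : Type*} (e : ι → E) : Prop where
  ortho_self : ∀ i : ι, M.inner (e i) (e i) = 1
  ortho_ne : ∀ i j : ι, i ≠ j → M.inner (e i) (e j) = 0
  total : ∀ x : E, HasSum (fun i => M.inner x (e i) • e i) x

/-- The coordinately invertible elements with respect to the orthonormal basis `e`:
nonzero elements all of whose coordinates are zero or invertible. -/
def CI {ι : Type*} (e : ι → E) : Set E :=
  {x | x ≠ 0 ∧ ∀ i : ι, M.inner (e i) x = 0 ∨ IsUnit (M.inner (e i) x)}

/-- `F(E)`: the `A`-linear span of the rank-one module maps `θ_{x,y}`. -/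
def F : Submodule A (E → E) :=
  Submodule.span A {T : E → E | ∃ x y : E, T = M.theta x y}

theorem theta_mem_F (x y : E) : M.theta x y ∈ M.F :=
  Submodule.subset_span ⟨x, y, rfl⟩

/-- `θ_{x,y}` as an element of `F(E)`. -/
def thetaF (x y : E) : M.F := ⟨M.theta x y, M.theta_mem_F x y⟩

/-- A map `T : E → E` is `A`-linear if it is additive and `A`-homogeneous. -/
def IsALinear (T : E → E) : Prop :=
  (∀ x y : E, T (x + y) = T x + T y) ∧ ∀ (a : A) (x : E), T (a • x) = a • T x

/-- A map `T : E → E` is conjugate `A`-linear if it is additive and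
`T (a • x) = star a • T x`. -/
def IsConjLinear (T : E → E) : Prop :=
  (∀ x y : E, T (x + y) = T x + T y) ∧ ∀ (a : A) (x : E), T (a • x) = star a • T x

/-- An `A`-linear map `Φ : F(E) → F(E)` is rank decreasing if it sends each `θ_{x,y₀}`
with `y₀ ∈ CI` to some `θ_{s,t₀}` with `t₀ ∈ CI`. -/
def RankDecreasing {ι : Type*} (e : ι → E) (Φ : M.F →ₗ[A] M.F) : Prop :=
  ∀ x : E, ∀ y₀ ∈ M.CI e, ∃ s : E, ∃ t₀ ∈ M.CI e,
    (Φ (M.thetaF x y₀) : E → E) = M.theta s t₀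

/-- An `A`-linear map `Φ : F(E) → F(E)` is rank-1 preserving if it is rank decreasing
and moreover `s ≠ 0` whenever `x ≠ 0`. -/
def Rank1Preserving {ι : Type*} (e : ι → E) (Φ : M.F →ₗ[A] M.F) : Prop :=
  ∀ x : E, ∀ y₀ ∈ M.CI e, ∃ s : E, ∃ t₀ ∈ M.CI e,
    (Φ (M.thetaF x y₀) : E → E) = M.theta s t₀ ∧ (x ≠ 0 → s ≠ 0)

end HilbertModule

section Auxiliary

open WeakDual

variable {A E ι : Type*} [CommCStarAlgebra A] [NormedAddCommGroup E] [Module A E]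

namespace HilbertModule

variable (M : HilbertModule A E)

theorem star_inner (x y : E) : star (M.inner x y) = M.inner y x :=
  (M.inner_conj_symm x y).symm

theorem inner_add_right (x y z : E) : M.inner x (y + z) = M.inner x y + M.inner x z := by
  rw [← M.star_inner (y + z) x, M.inner_add_left, star_add, M.star_inner, M.star_inner]

theorem inner_smul_right (a : A) (x y : E) : M.inner x (a • y) = star a * M.inner x y := by
  rw [← M.star_inner (a • y) x, M.inner_smul_left, star_mul, M.star_inner, mul_comm]

theorem inner_zero_left (x : E) : M.inner 0 x = 0 := by
  have h := M.inner_add_left 0 0 x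
  rw [add_zero] at h
  exact left_eq_add.mp h

theorem inner_zero_right (x : E) : M.inner x 0 = 0 := by
  rw [← M.star_inner 0 x, M.inner_zero_left, star_zero]

theorem inner_neg_right (x y : E) : M.inner x (-y) = - M.inner x y := by
  have h := M.inner_add_right x y (-y)
  rw [add_neg_cancel, M.inner_zero_right] at h
  linear_combination -h

/- theta identities (as functions) -/

theorem theta_apply (x y ξ : E) : M.theta x y ξ = M.inner ξ y • x := rfl

theorem theta_add_left (x x' y : E) : M.theta (x + x') y = M.theta x y + M.theta x' y :=
  funext fun ξ => smul_add _ _ _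

theorem theta_add_right (x y y' : E) : M.theta x (y + y') = M.theta x y + M.theta x y' :=
  funext fun ξ => by
    show M.inner ξ (y + y') • x = M.inner ξ y • x + M.inner ξ y' • x
    rw [M.inner_add_right, add_smul]

theorem theta_smul_left (a : A) (x y : E) : M.theta (a • x) y = a • M.theta x y :=
  funext fun ξ => by
    show M.inner ξ y • a • x = a • M.inner ξ y • x
    rw [smul_smul, smul_smul, mul_comm]

theorem theta_smul_right (a : A) (x y : E) : M.theta x (a • y) = star a • M.theta x y :=
  funext fun ξ => by
    show M.inner ξ (a • y) • x = star a • M.inner ξ y • x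
    rw [M.inner_smul_right, mul_smul]

theorem theta_star_smul (m : A) (x y : E) : M.theta x (star m • y) = M.theta (m • x) y := by
  rw [M.theta_smul_right, star_star, M.theta_smul_left]

theorem theta_zero_left (y : E) : M.theta 0 y = 0 :=
  funext fun ξ => smul_zero _

/- thetaF versions -/

theorem thetaF_add_left (x x' y : E) :
    M.thetaF (x + x') y = M.thetaF x y + M.thetaF x' y :=
  Subtype.ext (M.theta_add_left x x' y)

theorem thetaF_add_right (x y y' : E) :
    M.thetaF x (y + y') = M.thetaF x y + M.thetaF x y' :=
  Subtype.ext (M.theta_add_right x y y')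

theorem thetaF_smul_left (a : A) (x y : E) : M.thetaF (a • x) y = a • M.thetaF x y :=
  Subtype.ext (M.theta_smul_left a x y)

theorem thetaF_smul_right (a : A) (x y : E) : M.thetaF x (a • y) = star a • M.thetaF x y :=
  Subtype.ext (M.theta_smul_right a x y)

/- coordinates -/

variable {e : ι → E}

theorem ext_coord (he : M.IsONB e) {v w : E}
    (h : ∀ i, M.inner (e i) v = M.inner (e i) w) : v = w := by
  have hv := he.total v
  have hw := he.total w
  have hfw : (fun i => M.inner v (e i) • e i) = fun i => M.inner w (e i) • e i := by
    funext i
    rw [← M.star_inner (e i) v, ← M.star_inner (e i) w, h i]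
  rw [hfw] at hv
  exact hv.unique hw

theorem eq_zero_of_coord (he : M.IsONB e) {v : E}
    (h : ∀ i, M.inner (e i) v = 0) : v = 0 :=
  M.ext_coord he fun i => by rw [h i, M.inner_zero_right]

theorem exists_unit_coord (he : M.IsONB e) {c : E} (hc : c ∈ M.CI e) :
    ∃ i, IsUnit (M.inner (e i) c) := by
  by_contra h
  push_neg at h
  exact hc.1 (M.eq_zero_of_coord he fun i => (hc.2 i).resolve_right (h i))

theorem neg_mem_CI (he : M.IsONB e) {c : E} (hc : c ∈ M.CI e) : -c ∈ M.CI e := by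
  refine ⟨fun h => hc.1 (by simpa using congrArg Neg.neg h), fun i => ?_⟩
  rw [M.inner_neg_right]
  rcases hc.2 i with h | h
  · exact Or.inl (by rw [h, neg_zero])
  · exact Or.inr h.neg

theorem theta_right_cancel (he : M.IsONB e) {w w' c : E} (hc : c ∈ M.CI e)
    (h : M.theta w c = M.theta w' c) : w = w' := by
  obtain ⟨i, hi⟩ := M.exists_unit_coord he hc
  have h1 : M.inner (e i) c • w = M.inner (e i) c • w' := congrFun h (e i)
  exact hi.smul_left_cancel.mp h1

/-- If `θ_{u,v} = θ_{H,w}` with `H` coordinately invertible, then the coordinates of `w`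
are a fixed multiple of those of `v`. -/
theorem keyA (he : M.IsONB e) {u v H w : E} (hH : H ∈ M.CI e)
    (h : M.theta u v = M.theta H w) :
    ∃ m : A, ∀ i, M.inner (e i) w = m * M.inner (e i) v := by
  obtain ⟨j, hj⟩ := M.exists_unit_coord he hH
  refine ⟨star (M.inner (e j) u * ↑hj.unit⁻¹), fun i => ?_⟩
  have h1 : M.inner (e i) v • u = M.inner (e i) w • H := congrFun h (e i)
  have h2 : star (M.inner (e i) v) * M.inner (e j) u
      = star (M.inner (e i) w) * M.inner (e j) H := by
    have := congrArg (M.inner (e j)) h1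
    rwa [M.inner_smul_right, M.inner_smul_right] at this
  have hU : M.inner (e j) H * ↑hj.unit⁻¹ = 1 := hj.mul_val_inv
  have h3 : star (M.inner (e i) w)
      = star (M.inner (e i) v) * M.inner (e j) u * ↑hj.unit⁻¹ := by
    calc star (M.inner (e i) w)
        = star (M.inner (e i) w) * (M.inner (e j) H * ↑hj.unit⁻¹) := by rw [hU, mul_one]
      _ = star (M.inner (e i) w) * M.inner (e j) H * ↑hj.unit⁻¹ := by rw [mul_assoc]
      _ = star (M.inner (e i) v) * M.inner (e j) u * ↑hj.unit⁻¹ := by rw [h2]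
  have h4 := congrArg star h3
  rw [star_star] at h4
  rw [h4]
  simp only [star_mul', star_star]
  ring

end HilbertModule

end Auxiliary


section Auxiliary2

open WeakDual

namespace R1Paux

variable {A : Type*} [CommCStarAlgebra A]

theorem eq_zero_of_char {a : A} (h : ∀ χ : characterSpace ℂ A, χ a = 0) : a = 0 := by
  have h0 : gelfandTransform ℂ A a = 0 := by ext χ; simpa using h χ
  simpa using (gelfandTransform_isometry A).injective (by simpa using h0)

theorem eq_of_char {a b : A} (h : ∀ χ : characterSpace ℂ A, χ a = χ b) : a = b := by
  have h1 : a - b = 0 := eq_zero_of_char fun χ => by rw [map_sub, h χ, sub_self]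
  exact sub_eq_zero.mp h1

theorem isUnit_of_char {a : A} (h : ∀ χ : characterSpace ℂ A, χ a ≠ 0) : IsUnit a := by
  by_contra hn
  obtain ⟨χ, hχ⟩ := WeakDual.CharacterSpace.exists_apply_eq_zero hn
  exact h χ hχ

theorem char_norm_le [Nontrivial A] (χ : characterSpace ℂ A) (a : A) : ‖χ a‖ ≤ ‖a‖ :=
  spectrum.norm_le_norm_of_mem (AlgHom.apply_mem_spectrum χ a)

/-- An invertible self-adjoint "regularized square root" of `star b * b + ε²`. -/
noncomputable def dElt (b : A) (ε : ℝ) : A :=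
  cfc (fun t : ℝ => Real.sqrt (t + ε^2)) (star b * b)

theorem dElt_sa (b : A) (ε : ℝ) : IsSelfAdjoint (dElt b ε) := cfc_predicate _ _

theorem dElt_sq (b : A) (ε : ℝ) :
    dElt b ε * dElt b ε = star b * b + algebraMap ℝ A (ε^2) := by
  have hq : IsSelfAdjoint (star b * b) := IsSelfAdjoint.star_mul_self b
  have hcont : ContinuousOn (fun t : ℝ => Real.sqrt (t + ε^2)) (spectrum ℝ (star b * b)) :=
    (Real.continuous_sqrt.comp (continuous_id.add continuous_const)).continuousOn
  rw [dElt, ← cfc_mul _ _ _ hcont hcont]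
  have heq : (spectrum ℝ (star b * b)).EqOn
      (fun t => Real.sqrt (t + ε^2) * Real.sqrt (t + ε^2)) (fun t => t + ε^2) := by
    intro t ht
    have h0 : 0 ≤ t := spectrum_star_mul_self_nonneg t ht
    simp only
    rw [Real.mul_self_sqrt (by positivity)]
  rw [cfc_congr heq]
  have hadd : cfc (fun t : ℝ => t + ε^2) (star b * b)
      = cfc (fun t : ℝ => t) (star b * b) + cfc (fun _ : ℝ => ε^2) (star b * b) :=
    cfc_add (a := star b * b) (fun t => t) (fun _ => ε^2)
      (continuous_id.continuousOn) (continuous_const.continuousOn)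
  rw [hadd, cfc_id' ℝ (star b * b) hq, cfc_const (ε^2) (star b * b) hq]

theorem char_algebraMap_real (χ : characterSpace ℂ A) (r : ℝ) :
    χ (algebraMap ℝ A r) = (r : ℂ) := by
  rw [IsScalarTower.algebraMap_apply ℝ ℂ A, AlgHomClass.commutes]
  simp

theorem dElt_char_sq (b : A) (ε : ℝ) (χ : characterSpace ℂ A) :
    χ (dElt b ε) * χ (dElt b ε) = ((Complex.normSq (χ b) + ε^2 : ℝ) : ℂ) := by
  rw [← map_mul, dElt_sq, map_add, map_mul, map_star, char_algebraMap_real]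
  rw [RCLike.star_def]
  rw [mul_comm ((starRingEnd ℂ) (χ b)) (χ b), Complex.mul_conj]
  push_cast
  ring

theorem dElt_char_real (b : A) (ε : ℝ) (χ : characterSpace ℂ A) :
    χ (dElt b ε) = ((χ (dElt b ε)).re : ℂ) := by
  have h1 : (starRingEnd ℂ) (χ (dElt b ε)) = χ (dElt b ε) := by
    rw [← RCLike.star_def, ← map_star, (dElt_sa b ε).star_eq]
  exact (Complex.conj_eq_iff_re.mp h1).symm

theorem countable_support_of_summable {κ E : Type*} [NormedAddCommGroup E] {f : κ → E}
    (h : Summable f) : {k | f k ≠ 0}.Countable := by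
  have ht := h.tendsto_cofinite_zero
  have hfin : ∀ n : ℕ, {k | (1:ℝ)/(n+1) ≤ ‖f k‖}.Finite := by
    intro n
    have hU : Metric.ball (0:E) ((1:ℝ)/(n+1)) ∈ nhds (0:E) :=
      Metric.ball_mem_nhds _ (by positivity)
    have h2 := ht hU
    rw [Filter.mem_map, Filter.mem_cofinite] at h2
    refine h2.subset fun k hk => ?_
    simp only [Set.mem_setOf_eq] at hk
    simp only [Set.mem_compl_iff, Set.mem_preimage, Metric.mem_ball, dist_zero_right, not_lt]
    exact hk
  refine Set.Countable.mono ?_ (Set.countable_iUnion fun n => (hfin n).countable)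
  intro k hk
  have hpos : 0 < ‖f k‖ := norm_pos_iff.mpr hk
  obtain ⟨n, hn⟩ := exists_nat_one_div_lt hpos
  exact Set.mem_iUnion.mpr ⟨n, le_of_lt hn⟩

end R1Paux

namespace HilbertModule

open R1Paux

variable {A E ι : Type*} [CommCStarAlgebra A] [NormedAddCommGroup E] [Module A E]
variable (M : HilbertModule A E) {e : ι → E}

theorem inner_finset_sum_left {κ : Type*} (s : Finset κ) (f : κ → E) (y : E) :
    M.inner (∑ k ∈ s, f k) y = ∑ k ∈ s, M.inner (f k) y := by
  classical
  induction s using Finset.induction_on with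
  | empty => simp [M.inner_zero_left]
  | @insert k s hk ih => rw [Finset.sum_insert hk, M.inner_add_left, ih, Finset.sum_insert hk]

theorem inner_finset_sum_right {κ : Type*} (s : Finset κ) (f : κ → E) (y : E) :
    M.inner y (∑ k ∈ s, f k) = ∑ k ∈ s, M.inner y (f k) := by
  classical
  induction s using Finset.induction_on with
  | empty => simp [M.inner_zero_right]
  | @insert k s hk ih => rw [Finset.sum_insert hk, M.inner_add_right, ih, Finset.sum_insert hk]

theorem norm_finset_sum_sq (he : M.IsONB e) (c : ι → A) (s : Finset ι) :
    ‖∑ i ∈ s, c i • e i‖^2 = ‖∑ i ∈ s, c i * star (c i)‖ := by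
  classical
  rw [M.norm_sq_eq]
  congr 1
  rw [M.inner_finset_sum_left]
  refine Finset.sum_congr rfl fun i hi => ?_
  rw [M.inner_smul_left, M.inner_finset_sum_right]
  rw [Finset.sum_eq_single_of_mem i hi (fun j _ hne => ?_)]
  · rw [M.inner_smul_right, he.ortho_self, mul_one]
  · rw [M.inner_smul_right, he.ortho_ne i j (Ne.symm hne), mul_zero]

theorem norm_smul_basis (he : M.IsONB e) (c : A) (i : ι) : ‖c • e i‖ = ‖c‖ := by
  have h2 : ‖c • e i‖^2 = ‖c‖^2 := by
    rw [M.norm_sq_eq, M.inner_smul_left, M.inner_smul_right, he.ortho_self, mul_one,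
      CStarRing.norm_self_mul_star, pow_two]
  exact le_antisymm (by nlinarith [norm_nonneg (c • e i), norm_nonneg c])
    (by nlinarith [norm_nonneg (c • e i), norm_nonneg c])

theorem norm_coord_le [Nontrivial A] (he : M.IsONB e) (i : ι) (v : E) :
    ‖M.inner (e i) v‖ ≤ ‖v‖ := by
  set b := M.inner (e i) v with hb
  obtain ⟨c, hc⟩ := M.inner_self_pos ((-star b) • e i + v)
  have T11 : M.inner ((-star b) • e i) ((-star b) • e i) = star b * b := by
    rw [M.inner_smul_left, M.inner_smul_right, he.ortho_self, mul_one, star_neg, star_star]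
    ring
  have T12 : M.inner ((-star b) • e i) v = -(star b * b) := by
    rw [M.inner_smul_left, ← hb]; ring
  have T21 : M.inner v ((-star b) • e i) = -(star b * b) := by
    rw [M.inner_smul_right, star_neg, star_star]
    have h1 : M.inner v (e i) = star b := by rw [hb, M.star_inner]
    rw [h1]; ring
  have hww : M.inner ((-star b) • e i + v) ((-star b) • e i + v)
      = M.inner v v - star b * b := by
    rw [M.inner_add_left, M.inner_add_right, M.inner_add_right, T11, T12, T21]
    ring
  have h3 : M.inner v v = star b * b + star c * c := by
    rw [← hc, hww]; ring
  have hkey : ∀ χ : characterSpace ℂ A, Complex.normSq (χ b) ≤ ‖v‖^2 := by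
    intro χ
    have h2 : χ (M.inner v v)
        = ((Complex.normSq (χ b) + Complex.normSq (χ c) : ℝ) : ℂ) := by
      rw [h3, map_add, map_mul, map_mul, map_star, map_star, RCLike.star_def]
      rw [mul_comm ((starRingEnd ℂ) (χ b)), mul_comm ((starRingEnd ℂ) (χ c)),
        Complex.mul_conj, Complex.mul_conj]
      push_cast
      ring
    have h4 : ‖χ (M.inner v v)‖ ≤ ‖v‖^2 := by
      calc ‖χ (M.inner v v)‖ ≤ ‖M.inner v v‖ := char_norm_le χ _
        _ = ‖v‖^2 := (M.norm_sq_eq v).symm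
    rw [h2, Complex.norm_real] at h4
    have h5 := abs_of_nonneg
      (add_nonneg (Complex.normSq_nonneg (χ b)) (Complex.normSq_nonneg (χ c)))
    rw [Real.norm_eq_abs, h5] at h4
    nlinarith [Complex.normSq_nonneg (χ c)]
  have hbg : ‖b‖ = ‖gelfandTransform ℂ A b‖ :=
    ((gelfandTransform_isometry A).norm_map_of_map_zero (map_zero _) b).symm
  rw [hbg]
  refine (ContinuousMap.norm_le _ (norm_nonneg v)).mpr fun χ => ?_
  rw [gelfandTransform_apply_apply]
  have h6 := hkey χ
  have hns : ‖χ b‖^2 = Complex.normSq (χ b) := by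
    rw [Complex.sq_norm]
  nlinarith [norm_nonneg (χ b), norm_nonneg v]

/-- The coordinate map as an additive monoid hom. -/
def coordHom (e : ι → E) (i : ι) : E →+ A :=
  AddMonoidHom.mk' (fun v => M.inner (e i) v) (M.inner_add_right (e i))

theorem coord_continuous [Nontrivial A] (he : M.IsONB e) (i : ι) :
    Continuous (M.coordHom e i) :=
  AddMonoidHomClass.continuous_of_bound (M.coordHom e i) 1 fun v => by
    rw [one_mul]
    exact M.norm_coord_le he i v

theorem coord_hasSum [Nontrivial A] (he : M.IsONB e) {κ : Type*} {f : κ → E} {x : E}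
    (h : HasSum f x) (i : ι) :
    HasSum (fun k => M.inner (e i) (f k)) (M.inner (e i) x) := by
  have h1 := h.map (M.coordHom e i) (M.coord_continuous he i)
  simpa [coordHom, Function.comp_def] using h1

/-- Every element of `E` is the sum of two coordinately invertible elements. -/
theorem exists_CI_decomp (he : M.IsONB e) (hne : (M.CI e).Nonempty) (x : E) :
    ∃ g₁ g₂ : E, g₁ ∈ M.CI e ∧ g₂ ∈ M.CI e ∧ x = g₁ + g₂ := by
  classical
  obtain ⟨c₀, hc₀⟩ := hne
  haveI : Nontrivial A := by
    refine ⟨1, 0, fun h10 => ?_⟩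
    apply hc₀.1
    calc c₀ = (1:A) • c₀ := (one_smul A c₀).symm
      _ = (0:A) • c₀ := by rw [h10]
      _ = 0 := zero_smul A c₀
  haveI : CompleteSpace E := M.complete
  by_cases hx : x = 0
  · obtain ⟨i, _⟩ := M.exists_unit_coord he hc₀
    have heiCI : e i ∈ M.CI e := by
      constructor
      · intro h0
        have h1 := he.ortho_self i
        rw [h0, M.inner_zero_right] at h1
        exact zero_ne_one h1
      · intro j
        by_cases hji : j = i
        · subst hji; rw [he.ortho_self]; exact Or.inr isUnit_one
        · rw [he.ortho_ne j i hji]; exact Or.inl rfl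
    exact ⟨e i, -e i, heiCI, M.neg_mem_CI he heiCI, by rw [hx, add_neg_cancel]⟩
  · set a : ι → A := fun i => M.inner (e i) x with ha
    have hxsum : HasSum (fun i => star (a i) • e i) x := by
      have h1 := he.total x
      have h2 : (fun i => M.inner x (e i) • e i) = fun i => star (a i) • e i := by
        funext i
        rw [ha]
        simp only
        rw [← M.star_inner (e i) x]
      rwa [h2] at h1
    have hcnt : {i | a i ≠ 0}.Countable := by
      refine Set.Countable.mono ?_ (countable_support_of_summable hxsum.summable)
      intro i hi
      simp only [Set.mem_setOf_eq] at hi ⊢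
      intro h0
      apply hi
      have h1 : ‖star (a i) • e i‖ = ‖a i‖ := by rw [M.norm_smul_basis he, norm_star]
      rw [← norm_eq_zero, ← h1, h0, norm_zero]
    obtain ⟨enc, henc⟩ := Set.countable_iff_exists_injective.mp hcnt
    set ε : ι → ℝ := fun i => if h : a i ≠ 0 then ((1:ℝ)/2) ^ (enc ⟨i, h⟩) else 0 with hε
    have hεnn : ∀ i, 0 ≤ ε i := by
      intro i; rw [hε]; dsimp only; split <;> positivity
    have hεpos : ∀ i, a i ≠ 0 → 0 < ε i := by
      intro i h; rw [hε]; dsimp only; rw [dif_pos h]; positivity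
    have hεsq : Summable (fun i : ι => (ε i)^2) := by
      have h1 : Summable (fun s : {i | a i ≠ 0} => ((1:ℝ)/4) ^ (enc s)) :=
        (summable_geometric_of_lt_one (by norm_num) (by norm_num)).comp_injective henc
      have h2 : Summable (fun s : {i | a i ≠ 0} => (ε s)^2) := by
        refine h1.congr fun s => ?_
        rw [hε]; dsimp only; rw [dif_pos (show a ↑s ≠ 0 from s.2)]
        rw [← pow_mul, show ((1:ℝ)/4) = ((1:ℝ)/2)^2 by norm_num, ← pow_mul, mul_comm]
      have hsupp : Function.support (fun i : ι => (ε i)^2) ⊆ {i | a i ≠ 0} := by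
        intro i hi
        simp only [Function.mem_support] at hi
        simp only [Set.mem_setOf_eq]
        by_contra h
        apply hi
        rw [hε]; dsimp only; rw [dif_neg (not_not.mpr h)]
        norm_num
      rw [← Set.indicator_eq_self.mpr hsupp]
      exact summable_subtype_iff_indicator.mp h2
    set d : ι → A := fun i => if a i ≠ 0 then dElt (a i) (ε i) else 0 with hd
    have hdsq : ∀ i, a i ≠ 0 →
        d i * d i = star (a i) * a i + algebraMap ℝ A ((ε i)^2) := by
      intro i h; rw [hd]; dsimp only; rw [if_pos h]; exact dElt_sq _ _
    have hdsa : ∀ i, star (d i) = d i := by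
      intro i; rw [hd]; dsimp only; split
      · exact (dElt_sa _ _).star_eq
      · exact star_zero A
    have hdchar_sq : ∀ (i) (χ : characterSpace ℂ A), a i ≠ 0 →
        χ (d i) * χ (d i) = ((Complex.normSq (χ (a i)) + (ε i)^2 : ℝ) : ℂ) := by
      intro i χ h; rw [hd]; dsimp only; rw [if_pos h]; exact dElt_char_sq _ _ χ
    have hdchar_real : ∀ (i) (χ : characterSpace ℂ A), χ (d i) = ((χ (d i)).re : ℂ) := by
      intro i χ
      have h1 : (starRingEnd ℂ) (χ (d i)) = χ (d i) := by
        rw [← RCLike.star_def, ← map_star, hdsa i]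
      exact (Complex.conj_eq_iff_re.mp h1).symm
    have hdunit : ∀ i, a i ≠ 0 → IsUnit (d i) := by
      intro i h
      apply isUnit_of_char
      intro χ h0
      have h1 := hdchar_sq i χ h
      rw [h0, mul_zero] at h1
      have h2 : Complex.normSq (χ (a i)) + (ε i)^2 = 0 := by exact_mod_cast h1.symm
      nlinarith [Complex.normSq_nonneg (χ (a i)), hεpos i h]
    have hadunit : ∀ i, a i ≠ 0 → IsUnit (a i + d i) := by
      intro i h
      apply isUnit_of_char
      intro χ h0
      have hz : χ (a i) = - χ (d i) := by
        have h1 := map_add χ (a i) (d i)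
        rw [h0] at h1
        exact eq_neg_of_add_eq_zero_left h1.symm
      have h1 := hdchar_sq i χ h
      rw [hz, Complex.normSq_neg, hdchar_real i χ, Complex.normSq_ofReal] at h1
      have h2 : (χ (d i)).re * (χ (d i)).re
          = (χ (d i)).re * (χ (d i)).re + (ε i)^2 := by exact_mod_cast h1
      nlinarith [hεpos i h]
    have hdsum : Summable (fun i => d i • e i) := by
      rw [summable_iff_vanishing_norm]
      intro δ hδ
      have hδ'pos : 0 < min 1 (δ^2/4) := lt_min one_pos (by positivity)
      obtain ⟨s₁, hs₁⟩ := summable_iff_vanishing_norm.mp hxsum.summable _ hδ'pos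
      obtain ⟨s₂, hs₂⟩ := summable_iff_vanishing_norm.mp hεsq _ hδ'pos
      refine ⟨s₁ ∪ s₂, fun t ht => ?_⟩
      have ht1 : Disjoint t s₁ := ht.mono_right le_sup_left
      have ht2 : Disjoint t s₂ := ht.mono_right le_sup_right
      have e1 : ‖∑ i ∈ t, d i • e i‖^2 = ‖∑ i ∈ t, d i * star (d i)‖ :=
        M.norm_finset_sum_sq he d t
      have e2 : ∑ i ∈ t, d i * star (d i)
          = (∑ i ∈ t, star (a i) * a i)
            + ∑ i ∈ t, (if a i ≠ 0 then algebraMap ℝ A ((ε i)^2) else 0) := by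
        rw [← Finset.sum_add_distrib]
        refine Finset.sum_congr rfl fun i _ => ?_
        by_cases h : a i ≠ 0
        · rw [hdsa i, hdsq i h, if_pos h]
        · push_neg at h
          rw [if_neg (not_not.mpr h), hd]
          dsimp only
          rw [if_neg (not_not.mpr h), h]
          simp
      have e3 : ‖∑ i ∈ t, star (a i) * a i‖ = ‖∑ i ∈ t, star (a i) • e i‖^2 := by
        rw [M.norm_finset_sum_sq he (fun i => star (a i)) t]
        congr 1
        refine Finset.sum_congr rfl fun i _ => ?_
        rw [star_star]
      have e4 : ‖∑ i ∈ t, (if a i ≠ 0 then algebraMap ℝ A ((ε i)^2) else 0)‖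
          ≤ ∑ i ∈ t, (ε i)^2 := by
        refine le_trans (norm_sum_le _ _) ?_
        refine Finset.sum_le_sum fun i _ => ?_
        by_cases h : a i ≠ 0
        · rw [if_pos h, norm_algebraMap']
          rw [Real.norm_eq_abs]
          exact le_of_eq (abs_of_nonneg (by positivity))
        · rw [if_neg h, norm_zero]; positivity
      have e5 : ‖∑ i ∈ t, star (a i) • e i‖ < min 1 (δ^2/4) := hs₁ t ht1
      have e6 : ∑ i ∈ t, (ε i)^2 < min 1 (δ^2/4) := by
        have h7 := hs₂ t ht2
        rwa [Real.norm_eq_abs,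
          abs_of_nonneg (Finset.sum_nonneg fun i _ => by positivity)] at h7
      have e7 : ‖∑ i ∈ t, d i • e i‖^2 < δ^2/2 := by
        rw [e1, e2]
        calc ‖(∑ i ∈ t, star (a i) * a i)
              + ∑ i ∈ t, (if a i ≠ 0 then algebraMap ℝ A ((ε i)^2) else 0)‖
            ≤ ‖∑ i ∈ t, star (a i) * a i‖
              + ‖∑ i ∈ t, (if a i ≠ 0 then algebraMap ℝ A ((ε i)^2) else 0)‖ :=
              norm_add_le _ _
          _ < δ^2/2 := by
              rw [e3]
              have e8 : ‖∑ i ∈ t, star (a i) • e i‖^2 ≤ min 1 (δ^2/4) := by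
                nlinarith [norm_nonneg (∑ i ∈ t, star (a i) • e i),
                  min_le_left 1 (δ^2/4), e5]
              have e9 := le_trans e8 (min_le_right 1 (δ^2/4))
              have e10 := lt_of_lt_of_le e6 (min_le_right 1 (δ^2/4))
              nlinarith [e4]
      nlinarith [norm_nonneg (∑ i ∈ t, d i • e i), hδ]
    obtain ⟨w, hw⟩ := hdsum
    have hwcoord : ∀ j, M.inner (e j) w = d j := by
      intro j
      have h1 := M.coord_hasSum he hw j
      have h2 : (fun i => M.inner (e j) (d i • e i)) = (fun i => if i = j then d j else 0) := by
        funext i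
        rw [M.inner_smul_right, hdsa i]
        by_cases hij : i = j
        · subst hij; rw [he.ortho_self, mul_one, if_pos rfl]
        · rw [he.ortho_ne j i (Ne.symm hij), mul_zero, if_neg hij]
      rw [h2] at h1
      exact h1.unique (hasSum_ite_eq j (d j))
    have hex : ∃ i₀, a i₀ ≠ 0 := by
      by_contra h
      push_neg at h
      exact hx (M.eq_zero_of_coord he h)
    obtain ⟨i₀, hi₀⟩ := hex
    refine ⟨x + w, -w, ⟨?_, ?_⟩, ⟨?_, ?_⟩, by abel⟩
    · intro h0
      have hco := congrArg (fun v => M.inner (e i₀) v) h0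
      rw [M.inner_add_right, hwcoord i₀, M.inner_zero_right] at hco
      exact (hadunit i₀ hi₀).ne_zero hco
    · intro j
      rw [M.inner_add_right, hwcoord j]
      by_cases h : a j ≠ 0
      · exact Or.inr (hadunit j h)
      · push_neg at h
        left
        rw [hd]; dsimp only
        rw [if_neg (not_not.mpr h), add_zero]
        exact h
    · intro h0
      have h1 : w = 0 := by simpa using congrArg Neg.neg h0
      have h2 := hwcoord i₀
      rw [h1, M.inner_zero_right] at h2
      apply (hdunit i₀ hi₀).ne_zero
      rw [← h2]
    · intro j
      rw [M.inner_neg_right, hwcoord j]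
      by_cases h : a j ≠ 0
      · exact Or.inr (hdunit j h).neg
      · push_neg at h
        left
        rw [hd]; dsimp only
        rw [if_neg (not_not.mpr h), neg_zero]

end HilbertModule

end Auxiliary2


/-- a rank-1 preserving `A`-linear `Φ : F(E) → F(E)` with
`Φ(L_x^{CI}) ⊆ L_{φ(x)}^{CI}` for every `x` and `Φ(R_f^{CI}) ⊆ R_{r(f)}^{CI}` for every `f`,
such that `r(f₁)` and `r(f₂)` are not `A`-multiples of each other for some `f₁, f₂ ∈ CI`,
is of the form `Φ(θ_{x,f}) = θ_{A x, C f}` for `A`-linear maps `A, C`. -/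
theorem rank1Preserving_form_linear {A E ι : Type*} [CommCStarAlgebra A]
    [NormedAddCommGroup E] [Module A E]
    (M : HilbertModule A E) (e : ι → E) (he : M.IsONB e)
    (Φ : M.F →ₗ[A] M.F) (hΦ : M.Rank1Preserving e Φ)
    (hL : ∀ x : E, ∃ y : E, ∀ g ∈ M.CI e, ∃ g' ∈ M.CI e,
        (Φ (M.thetaF x g) : E → E) = M.theta y g')
    (r : E → E)
    (hR : ∀ f : E, ∀ h ∈ M.CI e, ∃ h' ∈ M.CI e,
        (Φ (M.thetaF h f) : E → E) = M.theta h' (r f))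
    (f₁ f₂ : E) (hf₁ : f₁ ∈ M.CI e) (hf₂ : f₂ ∈ M.CI e)
    (hsep₁ : ∀ α : A, r f₁ ≠ α • r f₂) (hsep₂ : ∀ β : A, r f₂ ≠ β • r f₁) :
    ∃ A₀ C₀ : E → E, HilbertModule.IsALinear (A := A) A₀ ∧
      HilbertModule.IsALinear (A := A) C₀ ∧
      ∀ x f : E, (Φ (M.thetaF x f) : E → E) = M.theta (A₀ x) (C₀ f) := by
  classical
  haveI : Nontrivial A := by
    refine ⟨1, 0, fun h10 => ?_⟩
    apply hf₁.1
    calc f₁ = (1:A) • f₁ := (one_smul A f₁).symm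
      _ = (0:A) • f₁ := by rw [h10]
      _ = 0 := zero_smul A f₁
  have hne : (M.CI e).Nonempty := ⟨f₁, hf₁⟩
  obtain ⟨y₀, hy₀⟩ := hL f₁
  choose cc ccCI hcc using hy₀
  set c₁ : E := cc f₁ hf₁ with hc₁def
  have hc₁CI : c₁ ∈ M.CI e := ccCI f₁ hf₁
  obtain ⟨i₀, hi₀⟩ := M.exists_unit_coord he hc₁CI
  -- linearity of Φ on theta's, at the level of functions
  have Phi_add_left : ∀ x x' f : E, (Φ (M.thetaF (x + x') f) : E → E)
      = (Φ (M.thetaF x f) : E → E) + (Φ (M.thetaF x' f) : E → E) := by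
    intro x x' f
    rw [M.thetaF_add_left, map_add, Submodule.coe_add]
  have Phi_add_right : ∀ x f f' : E, (Φ (M.thetaF x (f + f')) : E → E)
      = (Φ (M.thetaF x f) : E → E) + (Φ (M.thetaF x f') : E → E) := by
    intro x f f'
    rw [M.thetaF_add_right, map_add, Submodule.coe_add]
  have Phi_smul_left : ∀ (b : A) (x f : E), (Φ (M.thetaF (b • x) f) : E → E)
      = b • (Φ (M.thetaF x f) : E → E) := by
    intro b x f
    rw [M.thetaF_smul_left, map_smul, SetLike.val_smul]
  have Phi_smul_right : ∀ (b : A) (x f : E), (Φ (M.thetaF x (b • f)) : E → E)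
      = star b • (Φ (M.thetaF x f) : E → E) := by
    intro b x f
    rw [M.thetaF_smul_right, map_smul, SetLike.val_smul]
  -- the key re-anchoring lemma
  have hval : ∀ (f v : E), (Φ (M.thetaF f₁ f) : E → E) = M.theta y₀ v →
      ∀ h ∈ M.CI e, ∃ u : E, (Φ (M.thetaF h f) : E → E) = M.theta u v := by
    intro f v hv h hh
    obtain ⟨H, hHCI, hH⟩ := hR f f₁ hf₁
    have h1 : M.theta y₀ v = M.theta H (r f) := by rw [← hv, hH]
    obtain ⟨m, hm⟩ := M.keyA he hHCI h1
    have h2 : r f = star m • v := by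
      refine M.ext_coord he fun i => ?_
      rw [hm i, M.inner_smul_right, star_star]
    obtain ⟨h', hh'CI, hh'⟩ := hR f h hh
    refine ⟨m • h', ?_⟩
    rw [hh', h2, M.theta_star_smul]
  -- the map A₀
  have hAex : ∀ x : E, ∃ w : E, (Φ (M.thetaF x f₁) : E → E) = M.theta w c₁ := by
    intro x
    obtain ⟨g₁, g₂, hg₁, hg₂, hx12⟩ := M.exists_CI_decomp he hne x
    obtain ⟨u₁, hu₁⟩ := hval f₁ c₁ (hcc f₁ hf₁) g₁ hg₁
    obtain ⟨u₂, hu₂⟩ := hval f₁ c₁ (hcc f₁ hf₁) g₂ hg₂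
    refine ⟨u₁ + u₂, ?_⟩
    rw [hx12, Phi_add_left, hu₁, hu₂, M.theta_add_left]
  choose A₀ hA₀ using hAex
  have hAuniq : ∀ x w, (Φ (M.thetaF x f₁) : E → E) = M.theta w c₁ → w = A₀ x := by
    intro x w hw
    exact M.theta_right_cancel he hc₁CI (by rw [← hw, hA₀ x])
  have hAadd : ∀ x x', A₀ (x + x') = A₀ x + A₀ x' := by
    intro x x'
    refine (hAuniq (x + x') _ ?_).symm
    rw [Phi_add_left, hA₀ x, hA₀ x', M.theta_add_left]
  have hAsmul : ∀ (b : A) x, A₀ (b • x) = b • A₀ x := by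
    intro b x
    refine (hAuniq (b • x) _ ?_).symm
    rw [Phi_smul_left, hA₀ x, ← M.theta_smul_left]
  have hA₀f₁ : A₀ f₁ = y₀ := (hAuniq f₁ y₀ (hcc f₁ hf₁)).symm
  -- rank-1 injectivity of A₀
  have hAinj : ∀ x : E, x ≠ 0 → A₀ x ≠ 0 := by
    intro x hx h0
    obtain ⟨s, t, htCI, hEq2, hsne⟩ := hΦ x f₁ hf₁
    have h1 : M.theta s t = M.theta (A₀ x) c₁ := by rw [← hEq2, hA₀ x]
    rw [h0, M.theta_zero_left] at h1
    obtain ⟨j, hj⟩ := M.exists_unit_coord he htCI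
    have h2 : M.inner (e j) t • s = (0 : E) := congrFun h1 (e j)
    have h3 : s = 0 := by
      have h4 : M.inner (e j) t • s = M.inner (e j) t • (0 : E) := by
        rw [h2, smul_zero]
      exact hj.smul_left_cancel.mp h4
    exact (hsne hx) h3
  -- exactness at y₀
  have hK1 : ∀ v v' : E, M.theta y₀ v = M.theta y₀ v' → v = v' := by
    intro v v' hvv
    by_contra hne'
    have hz : ∃ i, M.inner (e i) (v - v') ≠ 0 := by
      by_contra h
      push_neg at h
      apply hne'
      have h5 : v - v' = 0 := M.eq_zero_of_coord he h
      exact sub_eq_zero.mp h5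
    obtain ⟨i, hi⟩ := hz
    have hty : M.inner (e i) (v - v') • y₀ = 0 := by
      have h1 : M.inner (e i) v • y₀ = M.inner (e i) v' • y₀ := congrFun hvv (e i)
      rw [sub_eq_add_neg, M.inner_add_right, M.inner_neg_right, add_smul, neg_smul, h1]
      abel
    have h5 : A₀ (M.inner (e i) (v - v') • f₁) = 0 := by
      rw [hAsmul, hA₀f₁, hty]
    have h6 : M.inner (e i) (v - v') • f₁ ≠ 0 := by
      intro h0
      obtain ⟨j, hj⟩ := M.exists_unit_coord he hf₁
      have h7 := congrArg (fun z => M.inner (e j) z) h0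
      rw [M.inner_smul_right, M.inner_zero_right] at h7
      have h8 : star (M.inner (e i) (v - v')) = 0 := by
        have h9 : star (M.inner (e i) (v - v')) * M.inner (e j) f₁
            = 0 * M.inner (e j) f₁ := by rw [h7, zero_mul]
        exact hj.mul_right_cancel h9
      exact hi (by simpa using congrArg star h8)
    exact hAinj _ h6 h5
  -- the master family
  have master : ∀ (g : E) (hg : g ∈ M.CI e) (h : E), h ∈ M.CI e → ∀ z : ℂ,
      ∃ W : E, (Φ (M.thetaF h (f₁ + (algebraMap ℂ A z) • g)) : E → E)
        = M.theta W (c₁ + (algebraMap ℂ A z) • cc g hg) := by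
    intro g hg h hh z
    have hrow : (Φ (M.thetaF f₁ (f₁ + (algebraMap ℂ A z) • g)) : E → E)
        = M.theta y₀ (c₁ + (algebraMap ℂ A z) • cc g hg) := by
      rw [Phi_add_right, Phi_smul_right, hcc f₁ hf₁, hcc g hg,
        M.theta_add_right, M.theta_smul_right]
    exact hval _ _ hrow h hh
  -- matching lemma (M2)
  have hM2 : ∀ (g : E) (hg : g ∈ M.CI e) (h : E), h ∈ M.CI e →
      (Φ (M.thetaF h g) : E → E) = M.theta (A₀ h) (cc g hg) := by
    intro g hg h hh
    obtain ⟨wg, hwg⟩ := hval g (cc g hg) (hcc g hg) h hh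
    suffices hsuff : wg = A₀ h by rw [hwg, hsuff]
    obtain ⟨i₁, hi₁⟩ := M.exists_unit_coord he (ccCI g hg)
    refine M.ext_coord he fun j => ?_
    refine R1Paux.eq_of_char fun χ => ?_
    -- common preparation, for arbitrary z
    have main : ∀ z : ℂ, ∃ W : E, ∀ i : ι,
        (starRingEnd ℂ) (χ (M.inner (e i) c₁)) * χ (M.inner (e j) (A₀ h))
          + (starRingEnd ℂ) (χ (M.inner (e i) (cc g hg))) * z * χ (M.inner (e j) wg)
        = ((starRingEnd ℂ) (χ (M.inner (e i) c₁))
            + (starRingEnd ℂ) (χ (M.inner (e i) (cc g hg))) * z) * χ (M.inner (e j) W) := by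
      intro z
      obtain ⟨W, hW⟩ := master g hg h hh z
      refine ⟨W, fun i => ?_⟩
      have hrow2 : (Φ (M.thetaF h (f₁ + (algebraMap ℂ A z) • g)) : E → E)
          = M.theta (A₀ h) c₁ + star (algebraMap ℂ A z) • M.theta wg (cc g hg) := by
        rw [Phi_add_right, Phi_smul_right, hA₀ h, hwg]
      have hEq : M.theta (A₀ h) c₁ + star (algebraMap ℂ A z) • M.theta wg (cc g hg)
          = M.theta W (c₁ + (algebraMap ℂ A z) • cc g hg) := by rw [← hrow2, hW]
      have h1 := congrFun hEq (e i)
      simp only [Pi.add_apply, Pi.smul_apply, HilbertModule.theta] at h1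
      rw [smul_smul, M.inner_add_right, M.inner_smul_right] at h1
      have h2 := congrArg (fun v => χ (M.inner (e j) v)) h1
      rw [M.inner_add_right, M.inner_smul_right, M.inner_smul_right, M.inner_smul_right] at h2
      simp only [star_mul, star_star, star_add, map_add, map_mul, map_star, RCLike.star_def,
        AlgHomClass.commutes, Algebra.algebraMap_self, RingHom.id_apply] at h2
      linear_combination h2
    have hα : (starRingEnd ℂ) (χ (M.inner (e i₀) c₁)) ≠ 0 := by
      simp only [ne_eq, map_eq_zero]
      exact (hi₀.map χ).ne_zero
    by_cases hγ : (starRingEnd ℂ) (χ (M.inner (e i₀) (cc g hg))) = 0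
    · -- use z = 1
      obtain ⟨W, hW⟩ := main 1
      have h10 := hW i₀
      rw [hγ] at h10
      simp only [zero_mul, mul_one, add_zero] at h10
      have hPR : χ (M.inner (e j) (A₀ h)) = χ (M.inner (e j) W) :=
        mul_left_cancel₀ hα h10
      have h11 := hW i₁
      rw [hPR] at h11
      have hγ₁ : (starRingEnd ℂ) (χ (M.inner (e i₁) (cc g hg))) ≠ 0 := by
        simp only [ne_eq, map_eq_zero]
        exact (hi₁.map χ).ne_zero
      have h12 : (starRingEnd ℂ) (χ (M.inner (e i₁) (cc g hg))) * χ (M.inner (e j) wg)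
          = (starRingEnd ℂ) (χ (M.inner (e i₁) (cc g hg))) * χ (M.inner (e j) W) := by
        linear_combination h11
      have h13 : χ (M.inner (e j) wg) = χ (M.inner (e j) W) :=
        mul_left_cancel₀ hγ₁ h12
      rw [h13, ← hPR]
    · -- use z = -conj α / conj γ
      set α := (starRingEnd ℂ) (χ (M.inner (e i₀) c₁)) with hαdef
      set γ := (starRingEnd ℂ) (χ (M.inner (e i₀) (cc g hg))) with hγdef
      obtain ⟨W, hW⟩ := main (-α / γ)
      have h10 := hW i₀
      rw [← hαdef, ← hγdef] at h10
      have hcoef : γ * (-α / γ) = -α := by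
        field_simp
      rw [hcoef] at h10
      simp only [add_neg_cancel, zero_mul] at h10
      -- h10 : α * P + (-α) * Q = 0
      have h11 : α * (χ (M.inner (e j) (A₀ h)) - χ (M.inner (e j) wg)) = 0 := by
        linear_combination h10
      have h12 := mul_eq_zero.mp h11
      rcases h12 with h12 | h12
      · exact absurd h12 hα
      · exact (sub_eq_zero.mp h12).symm
  -- the map C₀
  have hCmid : ∀ (x g : E) (hg : g ∈ M.CI e),
      (Φ (M.thetaF x g) : E → E) = M.theta (A₀ x) (cc g hg) := by
    intro x g hg
    obtain ⟨k₁, k₂, hk₁, hk₂, hx12⟩ := M.exists_CI_decomp he hne x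
    rw [hx12, Phi_add_left, hM2 g hg k₁ hk₁, hM2 g hg k₂ hk₂, ← M.theta_add_left,
      ← hAadd, ← hx12]
  have hCex : ∀ f : E, ∃ v : E, ∀ x : E,
      (Φ (M.thetaF x f) : E → E) = M.theta (A₀ x) v := by
    intro f
    obtain ⟨g₁, g₂, hg₁, hg₂, hf12⟩ := M.exists_CI_decomp he hne f
    refine ⟨cc g₁ hg₁ + cc g₂ hg₂, fun x => ?_⟩
    rw [hf12, Phi_add_right, hCmid x g₁ hg₁, hCmid x g₂ hg₂, M.theta_add_right]
  choose C₀ hC₀ using hCex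
  have hCuniq : ∀ f v, (∀ x, (Φ (M.thetaF x f) : E → E) = M.theta (A₀ x) v) → v = C₀ f := by
    intro f v hv
    refine hK1 v (C₀ f) ?_
    have h1 := hv f₁
    have h2 := hC₀ f f₁
    rw [hA₀f₁] at h1 h2
    rw [← h1, h2]
  have hCadd : ∀ f f', C₀ (f + f') = C₀ f + C₀ f' := by
    intro f f'
    refine (hCuniq (f + f') _ fun x => ?_).symm
    rw [Phi_add_right, hC₀ f x, hC₀ f' x, M.theta_add_right]
  have hCsmul : ∀ (b : A) f, C₀ (b • f) = b • C₀ f := by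
    intro b f
    refine (hCuniq (b • f) _ fun x => ?_).symm
    rw [Phi_smul_right, hC₀ f x, M.theta_smul_right]
  exact ⟨A₀, C₀, ⟨hAadd, hAsmul⟩, ⟨hCadd, hCsmul⟩, fun x f => hC₀ f x⟩
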